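/- Let k ≥ 2 and let v_0, …, v_k be k+1 unit vectors in R^2. Then the minimum, over all pairs 0 ≤ i < j ≤ k, of |det(v_i, v_j)| is at most sin(π/(k+1)). -/

import Mathlib

open Real

lemma unit_angle (v : EuclideanSpace ℝ (Fin 2)) (hv : ‖v‖ = 1) :
    ∃ θ ∈ Set.Icc (0:ℝ) π,
      (v 0 = cos θ ∧ v 1 = sin θ) ∨ (v 0 = -cos θ ∧ v 1 = -sin θ) := by
  have hsum : (v 0)^2 + (v 1)^2 = 1 := by
    have h1 : Real.sqrt (∑ i : Fin 2, ‖v i‖^2) = 1 := by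
      rw [← EuclideanSpace.norm_eq v, hv]
    have h2 := congrArg (· ^ 2) h1
    simp only [Real.sq_sqrt (by positivity : (0:ℝ) ≤ ∑ i : Fin 2, ‖v i‖^2)] at h2
    simpa [Fin.sum_univ_two, sq_abs] using h2
  set z : ℂ := ⟨v 0, v 1⟩ with hz
  have habs : ‖z‖ = 1 := by
    rw [Complex.norm_def, Complex.normSq_mk]
    rw [show v 0 * v 0 + v 1 * v 1 = 1 by nlinarith]
    exact Real.sqrt_one
  have hz0 : z ≠ 0 := by
    intro h; rw [h] at habs; simp at habs
  have hc : Real.cos (Complex.arg z) = v 0 := by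
    rw [Complex.cos_arg hz0, habs]; simp [hz]
  have hs : Real.sin (Complex.arg z) = v 1 := by
    rw [Complex.sin_arg, habs]; simp [hz]
  rcases le_or_gt 0 (Complex.arg z) with h0 | h0
  · exact ⟨Complex.arg z, ⟨h0, Complex.arg_le_pi z⟩, Or.inl ⟨hc.symm, hs.symm⟩⟩
  · refine ⟨Complex.arg z + π, ⟨?_, ?_⟩, Or.inr ⟨?_, ?_⟩⟩
    · linarith [Complex.neg_pi_lt_arg z]
    · linarith
    · rw [Real.cos_add_pi]; linarith
    · rw [Real.sin_add_pi]; linarith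

lemma det_eq_sin (v w : EuclideanSpace ℝ (Fin 2)) (θ φ : ℝ)
    (hv : (v 0 = cos θ ∧ v 1 = sin θ) ∨ (v 0 = -cos θ ∧ v 1 = -sin θ))
    (hw : (w 0 = cos φ ∧ w 1 = sin φ) ∨ (w 0 = -cos φ ∧ w 1 = -sin φ)) :
    |Matrix.det !![v 0, w 0; v 1, w 1]| = |sin (θ - φ)| := by
  rw [Matrix.det_fin_two_of]
  rcases hv with ⟨h1, h2⟩ | ⟨h1, h2⟩ <;> rcases hw with ⟨h3, h4⟩ | ⟨h3, h4⟩ <;>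
    rw [h1, h2, h3, h4] <;>
    [ rw [show cos θ * sin φ - cos φ * sin θ = -(sin (θ - φ)) by rw [Real.sin_sub]; ring, abs_neg];
      rw [show cos θ * -sin φ - -cos φ * sin θ = sin (θ - φ) by rw [Real.sin_sub]; ring];
      rw [show -cos θ * sin φ - cos φ * -sin θ = sin (θ - φ) by rw [Real.sin_sub]; ring];
      rw [show -cos θ * -sin φ - -cos φ * -sin θ = -(sin (θ - φ)) by rw [Real.sin_sub]; ring, abs_neg]]

lemma pigeon (k : ℕ) (hk : 2 ≤ k)
    (θ : Fin (k+1) → ℝ) (hθmem : ∀ j, θ j ∈ Set.Icc (0:ℝ) π)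
    (hc : ∀ i j : Fin (k + 1), i ≠ j →
      Real.sin (π / (k + 1)) < |Real.sin (θ i - θ j)|) : False := by
  set s := Real.sin (π / (k + 1)) with hs
  have hπ := Real.pi_pos
  have hk1 : (0:ℝ) < (k:ℝ) + 1 := by positivity
  have hfrac : π / ((k:ℝ) + 1) ≤ π / 2 := by
    apply div_le_div_of_nonneg_left hπ.le two_pos
    have : (2:ℝ) ≤ (k:ℝ) := by exact_mod_cast hk
    linarith
  have step : ∀ d : ℝ, 0 ≤ d → s < Real.sin d → π / ((k:ℝ) + 1) < d := by
    intro d hd hsd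
    by_contra hle
    push_neg at hle
    have : Real.sin d ≤ s :=
      Real.sin_le_sin_of_le_of_le_pi_div_two (by linarith) hfrac hle
    linarith
  set σ := Tuple.sort θ with hσ
  set ψ : Fin (k+1) → ℝ := θ ∘ σ with hψ
  have hmono : Monotone ψ := Tuple.monotone_sort θ
  have hmem : ∀ i, ψ i ∈ Set.Icc (0:ℝ) π := fun i => hθmem (σ i)
  have key : ∀ i j : Fin (k+1), i ≠ j → s < |Real.sin (ψ i - ψ j)| := by
    intro i j hij
    exact hc (σ i) (σ j) (fun h => hij (σ.injective h))
  -- interior gaps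
  have gaps : ∀ (i : ℕ) (_ : i < k),
      π / ((k:ℝ) + 1) < ψ ⟨i + 1, by omega⟩ - ψ ⟨i, by omega⟩ := by
    intro i hi
    set a : Fin (k+1) := ⟨i, by omega⟩
    set b : Fin (k+1) := ⟨i + 1, by omega⟩
    have hab : a < b := by simp [a, b, Fin.lt_def]
    have hd : 0 ≤ ψ b - ψ a := by linarith [hmono hab.le]
    have hdπ : ψ b - ψ a ≤ π := by
      have h1 := hmem a; have h2 := hmem b
      simp only [Set.mem_Icc] at h1 h2; linarith
    have hkey := key a b hab.ne
    rw [show ψ a - ψ b = -(ψ b - ψ a) by ring, Real.sin_neg, abs_neg,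
      abs_of_nonneg (Real.sin_nonneg_of_nonneg_of_le_pi hd hdπ)] at hkey
    exact step _ hd hkey
  -- wraparound gap
  have h0k : (⟨0, by omega⟩ : Fin (k+1)) ≠ ⟨k, by omega⟩ := by
    simp [Fin.ext_iff]; omega
  set a : Fin (k+1) := ⟨0, by omega⟩
  set b : Fin (k+1) := ⟨k, by omega⟩
  have hd : 0 ≤ ψ b - ψ a := by
    have : a ≤ b := by simp [a, b, Fin.le_def]
    linarith [hmono this]
  have hdπ : ψ b - ψ a ≤ π := by
    have h1 := hmem a; have h2 := hmem b
    simp only [Set.mem_Icc] at h1 h2; linarith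
  have hwrap : π / ((k:ℝ) + 1) < π - (ψ b - ψ a) := by
    have hkey := key a b h0k
    rw [show ψ a - ψ b = -(ψ b - ψ a) by ring, Real.sin_neg, abs_neg,
      abs_of_nonneg (Real.sin_nonneg_of_nonneg_of_le_pi hd hdπ),
      show ψ b - ψ a = π - (π - (ψ b - ψ a)) by ring, Real.sin_pi_sub] at hkey
    exact step _ (by linarith) hkey
  -- telescoping sum
  set g : ℕ → ℝ := fun i => ψ ⟨min i k, by omega⟩ with hg
  have htel : ∑ i ∈ Finset.range k, (g (i + 1) - g i) = g k - g 0 :=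
    Finset.sum_range_sub g k
  have hsum : (k : ℝ) * (π / ((k:ℝ) + 1)) < g k - g 0 := by
    rw [← htel]
    have := Finset.sum_lt_sum_of_nonempty
      (s := Finset.range k) (by simp; omega)
      (f := fun _ => π / ((k:ℝ) + 1)) (g := fun i => g (i + 1) - g i) ?_
    · simpa using this
    · intro i hi
      simp only [Finset.mem_range] at hi
      have := gaps i hi
      have e1 : g (i + 1) = ψ ⟨i + 1, by omega⟩ := by
        simp only [hg]; congr 1; simp [Fin.ext_iff]; omega
      have e2 : g i = ψ ⟨i, by omega⟩ := by
        simp only [hg]; congr 1; simp [Fin.ext_iff]; omega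
      show π / ((k:ℝ) + 1) < g (i + 1) - g i
      rw [e1, e2]; exact this
  have egk : g k = ψ b := by simp only [hg]; congr 1; simp [Fin.ext_iff, b]
  have eg0 : g 0 = ψ a := by simp only [hg]; congr 1
  rw [egk, eg0] at hsum
  have : ((k:ℝ) + 1) * (π / ((k:ℝ) + 1)) = π := by field_simp
  nlinarith [hwrap, hsum]

/-- For `k + 1` unit vectors `v₀, …, v_k` in `ℝ²` (`k ≥ 2`), the minimum over all pairs
`i < j` of `|det(vᵢ, vⱼ)|` is at most `sin (π / (k+1))`. -/
theorem stmt16 (k : ℕ) (hk : 2 ≤ k) (v : Fin (k + 1) → EuclideanSpace ℝ (Fin 2))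
    (hv : ∀ j, ‖v j‖ = 1) :
    ∃ i j : Fin (k + 1), i < j ∧
      |Matrix.det !![v i 0, v j 0; v i 1, v j 1]| ≤
        Real.sin (Real.pi / (k + 1)) := by
  by_contra hcon
  push_neg at hcon
  choose θ hθmem hθeq using fun j => unit_angle (v j) (hv j)
  apply pigeon k hk θ hθmem
  intro i j hij
  rcases lt_or_gt_of_ne hij with h | h
  · have := hcon i j h
    rwa [det_eq_sin (v i) (v j) (θ i) (θ j) (hθeq i) (hθeq j)] at this
  · have := hcon j i h
    rw [det_eq_sin (v j) (v i) (θ j) (θ i) (hθeq j) (hθeq i)] at this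
    rwa [show θ i - θ j = -(θ j - θ i) by ring, Real.sin_neg, abs_neg]
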